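/- If F is an ultrafilter of separations in (X, f) of order k+1, then T = {(A, B) : (B, A) ∈ F} is a tangle of separations of order k+1 on (X, f). -/
import Mathlib


open Set

variable {α : Type*}

/-- Symmetry of a set function: `f A = f Aᶜ`. -/
def SymmFn (f : Set α → ℕ) : Prop := ∀ A : Set α, f A = f Aᶜ

/-- Submodularity of a set function. -/
def SubmodFn (f : Set α → ℕ) : Prop :=
  ∀ A B : Set α, f A + f B ≥ f (A ∩ B) + f (A ∪ B)

/-- A separation of the ground set: a partition `(A, B)` of the universe. -/
def IsSep (p : Set α × Set α) : Prop :=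
  p.1 ∪ p.2 = Set.univ ∧ p.1 ∩ p.2 = ∅

/-- Partial order on separations: `(A,B) ≤ (C,D)` iff `A ⊆ C` and `D ⊆ B`. -/
def SepLE (p q : Set α × Set α) : Prop := p.1 ⊆ q.1 ∧ q.2 ⊆ p.2

/-- Tangle of separations of order `k+1`. -/
def IsTangle (f : Set α → ℕ) (k : ℕ) (T : Set (Set α × Set α)) : Prop :=
  (∀ p ∈ T, IsSep p ∧ f p.1 ≤ k) ∧
  (∀ A B : Set α, IsSep (A, B) → f A ≤ k → ((A, B) ∈ T ∨ (B, A) ∈ T)) ∧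
  (∀ e : α, f {e} ≤ k → (({e} : Set α), ({e} : Set α)ᶜ) ∈ T) ∧
  (∀ p₁ ∈ T, ∀ p₂ ∈ T, ∀ p₃ ∈ T,
    p₁.1 ∪ p₂.1 ∪ p₃.1 ≠ (Set.univ : Set α))

/-- Linear tangle of separations of order `k+1`. -/
def IsLinearTangle (f : Set α → ℕ) (k : ℕ) (T : Set (Set α × Set α)) : Prop :=
  (∀ p ∈ T, IsSep p ∧ f p.1 ≤ k) ∧
  (∀ A B : Set α, IsSep (A, B) → f A ≤ k → ((A, B) ∈ T ∨ (B, A) ∈ T)) ∧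
  (∀ e : α, f {e} ≤ k → (({e} : Set α), ({e} : Set α)ᶜ) ∈ T) ∧
  (∀ p₁ ∈ T, ∀ p₂ ∈ T, ∀ e : α, f {e} ≤ k →
    p₁.1 ∪ p₂.1 ∪ {e} ≠ (Set.univ : Set α))

/-- Ultrafilter of separations of order `k+1`. -/
def IsUltraSep (f : Set α → ℕ) (k : ℕ) (F : Set (Set α × Set α)) : Prop :=
  (∀ p ∈ F, IsSep p ∧ f p.1 ≤ k) ∧
  (∀ A B : Set α, IsSep (A, B) → f A ≤ k → ((A, B) ∈ F ∨ (B, A) ∈ F)) ∧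
  ((∅, (Set.univ : Set α)) ∉ F) ∧
  (∀ e : α, f {e} ≤ k → (({e} : Set α), ({e} : Set α)ᶜ) ∉ F) ∧
  (∀ p ∈ F, ∀ q : Set α × Set α, SepLE p q → IsSep q → f q.1 ≤ k → q ∈ F) ∧
  (∀ p ∈ F, ∀ q ∈ F, f (p.1 ∩ q.1) ≤ k → (p.1 ∩ q.1, p.2 ∪ q.2) ∈ F)

/-- Weak ultrafilter of separations of order `k+1`. -/
def IsWeakUltraSep (f : Set α → ℕ) (k : ℕ) (F : Set (Set α × Set α)) : Prop :=
  (∀ p ∈ F, IsSep p ∧ f p.1 ≤ k) ∧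
  (∀ A B : Set α, IsSep (A, B) → f A ≤ k → ((A, B) ∈ F ∨ (B, A) ∈ F)) ∧
  ((∅, (Set.univ : Set α)) ∉ F) ∧
  (∀ e : α, f {e} ≤ k → (({e} : Set α), ({e} : Set α)ᶜ) ∉ F) ∧
  (∀ p ∈ F, ∀ q : Set α × Set α, SepLE p q → IsSep q → f q.1 ≤ k → q ∈ F) ∧
  (∀ p ∈ F, ∀ q ∈ F, f (p.1 ∩ q.1) ≤ k → p.1 ∩ q.1 ≠ ∅)

/-- Single ultrafilter of separations of order `k+1`. -/
def IsSingleUltraSep (f : Set α → ℕ) (k : ℕ) (F : Set (Set α × Set α)) : Prop :=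
  (∀ p ∈ F, IsSep p ∧ f p.1 ≤ k) ∧
  (∀ A B : Set α, IsSep (A, B) → f A ≤ k → ((A, B) ∈ F ∨ (B, A) ∈ F)) ∧
  ((∅, (Set.univ : Set α)) ∉ F) ∧
  (∀ e : α, f {e} ≤ k → (({e} : Set α), ({e} : Set α)ᶜ) ∉ F) ∧
  (∀ p ∈ F, ∀ q : Set α × Set α, SepLE p q → IsSep q → f q.1 ≤ k → q ∈ F) ∧
  (∀ p ∈ F, ∀ e : α, f {e} ≤ k → f (p.1 \ {e}) ≤ k →
    (p.1 \ {e}, p.2 ∪ {e}) ∈ F)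

/-- Profile of separations of order `k+1`. -/
def IsProfileSep (f : Set α → ℕ) (k : ℕ) (P : Set (Set α × Set α)) : Prop :=
  (∀ p ∈ P, IsSep p ∧ f p.1 ≤ k) ∧
  (∀ A B : Set α, IsSep (A, B) → f A ≤ k → ((A, B) ∈ P ∨ (B, A) ∈ P)) ∧
  (∀ p : Set α × Set α, ∀ q ∈ P, SepLE p q → IsSep p → f p.1 ≤ k →
    (p.2, p.1) ∉ P) ∧
  (∀ p ∈ P, ∀ q ∈ P, (p.2 ∩ q.2, p.1 ∪ q.1) ∉ P)

/-- A profile is non-principal if it contains all small singleton separations. -/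
def NonPrincipalSep (f : Set α → ℕ) (k : ℕ) (P : Set (Set α × Set α)) : Prop :=
  ∀ e : α, f {e} ≤ k → (({e} : Set α), ({e} : Set α)ᶜ) ∈ P

section Helpers
variable {f : Set α → ℕ} {k : ℕ} {F : Set (Set α × Set α)}

lemma sep_snd_eq {p : Set α × Set α} (h : IsSep p) : p.2 = p.1ᶜ := by
  obtain ⟨hu, hi⟩ := h
  ext x
  simp only [mem_compl_iff]
  constructor
  · intro hx hA
    have : x ∈ p.1 ∩ p.2 := ⟨hA, hx⟩
    rw [hi] at this; exact this
  · intro hx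
    have : x ∈ p.1 ∪ p.2 := by rw [hu]; trivial
    exact this.resolve_left hx

lemma sep_pair {A : Set α} : IsSep (A, Aᶜ) :=
  ⟨union_compl_self A, inter_compl_self A⟩

variable {f : Set α → ℕ} {k : ℕ} {F : Set (Set α × Set α)}

lemma f_compl (hs : SymmFn f) (A : Set α) : f Aᶜ = f A := (hs A).symm

lemma f_empty_le (hs : SymmFn f) (hm : SubmodFn f) {A : Set α} (hA : f A ≤ k) :
    f (∅ : Set α) ≤ k := by
  have h := hm A Aᶜ
  rw [inter_compl_self, union_compl_self] at h
  have h1 : f (univ : Set α) = f (∅ : Set α) := by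
    rw [hs (∅ : Set α), compl_empty]
  have h2 : f Aᶜ = f A := (hs A).symm
  omega

/-- Two members of an ultrafilter cannot have disjoint first coordinates. -/
lemma disj_false (hs : SymmFn f) (hm : SubmodFn f) (hF : IsUltraSep f k F)
    {p q : Set α × Set α} (hp : p ∈ F) (hq : q ∈ F) (h : p.1 ∩ q.1 = ∅) : False := by
  obtain ⟨h0, h1, h2, h3, h4, h5⟩ := hF
  have hfe : f (∅ : Set α) ≤ k := f_empty_le hs hm (h0 p hp).2
  have hmem := h5 p hp q hq (by rw [h]; exact hfe)
  have hp2 : p.2 = p.1ᶜ := sep_snd_eq (h0 p hp).1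
  have hq2 : q.2 = q.1ᶜ := sep_snd_eq (h0 q hq).1
  have hu : p.2 ∪ q.2 = univ := by
    rw [hp2, hq2, ← compl_inter, h, compl_empty]
  rw [h, hu] at hmem
  exact h2 hmem

/-- If `E` is small and disjoint from some member's first coordinate,
then `(Eᶜ, E) ∈ F`. -/
lemma backward_mem (hs : SymmFn f) (hm : SubmodFn f) (hF : IsUltraSep f k F)
    {E : Set α} (hE : f E ≤ k) {q : Set α × Set α} (hq : q ∈ F)
    (hd : E ∩ q.1 = ∅) : (Eᶜ, E) ∈ F := by
  rcases hF.2.1 E Eᶜ sep_pair hE with h | h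
  · exact absurd hd (by
      intro hd'
      exact disj_false hs hm hF h hq hd')
  · exact h

/-- Case: both "outgoing corners" of `B₁` are small. -/
lemma both_small (hs : SymmFn f) (hm : SubmodFn f) (hF : IsUltraSep f k F)
    {B₁ B₂ B₃ : Set α} (h1 : (B₁, B₁ᶜ) ∈ F) (h2 : (B₂, B₂ᶜ) ∈ F) (h3 : (B₃, B₃ᶜ) ∈ F)
    (he : B₁ ∩ B₂ ∩ B₃ = ∅)
    (s2 : f (B₁ ∩ B₂ᶜ) ≤ k) (s3 : f (B₁ ∩ B₃ᶜ) ≤ k) : False := by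
  have hd : ∀ x, x ∈ B₁ → x ∈ B₂ → x ∈ B₃ → False := by
    intro x a b c
    have : x ∈ B₁ ∩ B₂ ∩ B₃ := ⟨⟨a, b⟩, c⟩
    rw [he] at this; exact this
  have P2 : ((B₁ ∩ B₂ᶜ)ᶜ, B₁ ∩ B₂ᶜ) ∈ F :=
    backward_mem hs hm hF s2 h2 (by ext x; simp)
  have P3 : ((B₁ ∩ B₃ᶜ)ᶜ, B₁ ∩ B₃ᶜ) ∈ F :=
    backward_mem hs hm hF s3 h3 (by ext x; simp)
  have hcorner : (B₁ ∩ B₂ᶜ)ᶜ ∩ (B₁ ∩ B₃ᶜ)ᶜ = B₁ᶜ := by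
    ext x; simp only [mem_inter_iff, mem_compl_iff, not_and, not_not]
    constructor
    · intro ⟨a, b⟩ hx
      exact hd x hx (a hx) (b hx)
    · tauto
  have hfk : f ((B₁, B₁ᶜ).1) ≤ k := (hF.1 _ h1).2
  have hcf : f ((B₁ ∩ B₂ᶜ)ᶜ ∩ (B₁ ∩ B₃ᶜ)ᶜ) ≤ k := by
    rw [hcorner, f_compl hs]; exact hfk
  have R := hF.2.2.2.2.2 _ P2 _ P3 hcf
  exact disj_false hs hm hF R h1 (by
    show ((B₁ ∩ B₂ᶜ)ᶜ ∩ (B₁ ∩ B₃ᶜ)ᶜ) ∩ B₁ = ∅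
    rw [hcorner]; exact compl_inter_self B₁)

/-- Case: cyclic smallness. -/
lemma cycle_small (hs : SymmFn f) (hm : SubmodFn f) (hF : IsUltraSep f k F)
    {B₁ B₂ B₃ : Set α} (h1 : (B₁, B₁ᶜ) ∈ F) (h2 : (B₂, B₂ᶜ) ∈ F) (h3 : (B₃, B₃ᶜ) ∈ F)
    (he : B₁ ∩ B₂ ∩ B₃ = ∅)
    (s12 : f (B₁ ∩ B₂ᶜ) ≤ k) (s23 : f (B₂ ∩ B₃ᶜ) ≤ k) (s31 : f (B₃ ∩ B₁ᶜ) ≤ k) :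
    False := by
  have hd : ∀ x, x ∈ B₁ → x ∈ B₂ → x ∈ B₃ → False := by
    intro x a b c
    have : x ∈ B₁ ∩ B₂ ∩ B₃ := ⟨⟨a, b⟩, c⟩
    rw [he] at this; exact this
  have P12 : ((B₁ ∩ B₂ᶜ)ᶜ, B₁ ∩ B₂ᶜ) ∈ F :=
    backward_mem hs hm hF s12 h2 (by ext x; simp)
  have P31 : ((B₃ ∩ B₁ᶜ)ᶜ, B₃ ∩ B₁ᶜ) ∈ F :=
    backward_mem hs hm hF s31 h1 (by ext x; simp)
  have hcorner : (B₁ ∩ B₂ᶜ)ᶜ ∩ B₃ = B₁ᶜ ∩ B₃ := by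
    ext x; simp only [mem_inter_iff, mem_compl_iff, not_and, not_not]
    constructor
    · intro ⟨a, b⟩
      refine ⟨fun hx => hd x hx (a hx) b, b⟩
    · tauto
  have hcf : f ((B₁ ∩ B₂ᶜ)ᶜ ∩ (B₃, B₃ᶜ).1) ≤ k := by
    show f ((B₁ ∩ B₂ᶜ)ᶜ ∩ B₃) ≤ k
    rw [hcorner]
    have : B₁ᶜ ∩ B₃ = B₃ ∩ B₁ᶜ := inter_comm _ _
    rw [this]; exact s31
  have Q := hF.2.2.2.2.2 _ P12 _ h3 hcf
  exact disj_false hs hm hF Q P31 (by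
    show ((B₁ ∩ B₂ᶜ)ᶜ ∩ B₃) ∩ (B₃ ∩ B₁ᶜ)ᶜ = ∅
    rw [hcorner]; ext x
    simp only [mem_inter_iff, mem_compl_iff, mem_empty_iff_false, iff_false, not_and, not_not]
    tauto)

/-- One of the two crossed corners of two members is small. -/
lemma corner_small (hs : SymmFn f) (hm : SubmodFn f)
    {A B : Set α} (hA : f A ≤ k) (hB : f B ≤ k) :
    f (A ∩ Bᶜ) ≤ k ∨ f (B ∩ Aᶜ) ≤ k := by
  have h := hm A Bᶜ
  have e1 : f Bᶜ = f B := (hs B).symm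
  have e2 : f (A ∪ Bᶜ) = f (B ∩ Aᶜ) := by
    rw [hs (A ∪ Bᶜ), compl_union, compl_compl, inter_comm]
  omega

lemma triple_perm {A B C : Set α} (h : A ∩ B ∩ C = ∅) : C ∩ A ∩ B = ∅ := by
  ext x
  have := Set.eq_empty_iff_forall_notMem.mp h x
  simp only [mem_inter_iff, mem_empty_iff_false, iff_false] at *
  tauto

lemma triple_false_aux (hs : SymmFn f) (hm : SubmodFn f) (hF : IsUltraSep f k F)
    {B₁ B₂ B₃ : Set α} (h1 : (B₁, B₁ᶜ) ∈ F) (h2 : (B₂, B₂ᶜ) ∈ F) (h3 : (B₃, B₃ᶜ) ∈ F)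
    (he : B₁ ∩ B₂ ∩ B₃ = ∅) (s12 : f (B₁ ∩ B₂ᶜ) ≤ k) : False := by
  have fB : ∀ {B : Set α}, (B, Bᶜ) ∈ F → f B ≤ k := fun h => (hF.1 _ h).2
  rcases corner_small (k := k) hs hm (fB h1) (fB h3) with s13 | s31
  · exact both_small hs hm hF h1 h2 h3 he s12 s13
  · rcases corner_small (k := k) hs hm (fB h3) (fB h2) with s32 | s23
    · exact both_small hs hm hF h3 h1 h2 (triple_perm he) s31 s32
    · exact cycle_small hs hm hF h1 h2 h3 he s12 s23 s31

lemma triple_false (hs : SymmFn f) (hm : SubmodFn f) (hF : IsUltraSep f k F)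
    {B₁ B₂ B₃ : Set α} (h1 : (B₁, B₁ᶜ) ∈ F) (h2 : (B₂, B₂ᶜ) ∈ F) (h3 : (B₃, B₃ᶜ) ∈ F)
    (he : B₁ ∩ B₂ ∩ B₃ = ∅) : False := by
  have fB : ∀ {B : Set α}, (B, Bᶜ) ∈ F → f B ≤ k := fun h => (hF.1 _ h).2
  rcases corner_small (k := k) hs hm (fB h1) (fB h2) with s12 | s21
  · exact triple_false_aux hs hm hF h1 h2 h3 he s12
  · exact triple_false_aux hs hm hF h2 h1 h3 (by rw [inter_comm B₂ B₁]; exact he) s21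

end Helpers

theorem stmt7 [Fintype α] (f : Set α → ℕ) (hs : SymmFn f) (hm : SubmodFn f)
    (k : ℕ) (F : Set (Set α × Set α)) (hF : IsUltraSep f k F) :
    IsTangle f k {p : Set α × Set α | (p.2, p.1) ∈ F} := by
  refine ⟨?_, ?_, ?_, ?_⟩
  · intro p hp
    simp only [mem_setOf_eq] at hp
    obtain ⟨hsep, hfk⟩ := hF.1 _ hp
    have hc : p.1 = p.2ᶜ := sep_snd_eq hsep
    refine ⟨⟨?_, ?_⟩, ?_⟩
    · rw [union_comm]; exact hsep.1
    · rw [inter_comm]; exact hsep.2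
    · rw [hc, f_compl hs]; exact hfk
  · intro A B hsep hfA
    have hB : B = Aᶜ := sep_snd_eq hsep
    have hsep' : IsSep (B, A) := ⟨by rw [union_comm]; exact hsep.1,
      by rw [inter_comm]; exact hsep.2⟩
    rcases hF.2.1 B A hsep' (by rw [hB, f_compl hs]; exact hfA) with h | h
    · exact Or.inl h
    · exact Or.inr h
  · intro e hfe
    have hsep' : IsSep (({e} : Set α)ᶜ, ({e} : Set α)) :=
      ⟨compl_union_self _, compl_inter_self _⟩
    rcases hF.2.1 ({e} : Set α)ᶜ {e} hsep' (by rw [f_compl hs]; exact hfe) with h | h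
    · exact h
    · exact absurd h (hF.2.2.2.1 e hfe)
  · intro p₁ hp₁ p₂ hp₂ p₃ hp₃ hcontra
    simp only [mem_setOf_eq] at hp₁ hp₂ hp₃
    have e₁ : p₁.1 = p₁.2ᶜ := sep_snd_eq (hF.1 _ hp₁).1
    have e₂ : p₂.1 = p₂.2ᶜ := sep_snd_eq (hF.1 _ hp₂).1
    have e₃ : p₃.1 = p₃.2ᶜ := sep_snd_eq (hF.1 _ hp₃).1
    rw [e₁] at hp₁; rw [e₂] at hp₂; rw [e₃] at hp₃
    rw [e₁, e₂, e₃] at hcontra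
    have he : p₁.2 ∩ p₂.2 ∩ p₃.2 = ∅ := by
      have := congrArg compl hcontra
      simpa [compl_union, compl_compl] using this
    exact triple_false hs hm hF hp₁ hp₂ hp₃ he
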